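/- For any real number β with cos(β) ≠ 1 and cos(kβ) ≠ 1 for the relevant indices, setting b_k = (1 - cos(β))/(1 - cos(kβ)), the recursion b_{k-1} · (b_k - 1)² · b_{k+1} - b_k² = 0 holds. -/

import Mathlib

theorem stmt_1 (β : ℝ) (hβ : Real.cos β ≠ 1)
    (b : ℤ → ℝ) (hb : ∀ k : ℤ, b k = (1 - Real.cos β) / (1 - Real.cos (k * β)))
    (k : ℤ)
    (h1 : Real.cos ((k - 1) * β) ≠ 1)
    (h2 : Real.cos (k * β) ≠ 1)
    (h3 : Real.cos ((k + 1) * β) ≠ 1) :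
    b (k - 1) * (b k - 1) ^ 2 * b (k + 1) - b k ^ 2 = 0 := by
  have E1 : ((k - 1 : ℤ) : ℝ) * β = (k : ℝ) * β - β := by push_cast; ring
  have E3 : ((k + 1 : ℤ) : ℝ) * β = (k : ℝ) * β + β := by push_cast; ring
  rw [hb, hb, hb]
  have E1' : ((k : ℝ) - 1) * β = (k : ℝ) * β - β := by ring
  have E3' : ((k : ℝ) + 1) * β = (k : ℝ) * β + β := by ring
  rw [E1'] at h1
  rw [E3'] at h3
  rw [E1, E3]
  rw [Real.cos_sub] at h1 ⊢
  rw [Real.cos_add] at h3 ⊢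
  have hc : (1 : ℝ) - Real.cos β ≠ 0 := sub_ne_zero.mpr (Ne.symm hβ)
  have hc1 : (1 : ℝ) - (Real.cos ((k:ℝ)*β) * Real.cos β + Real.sin ((k:ℝ)*β) * Real.sin β) ≠ 0 :=
    sub_ne_zero.mpr (Ne.symm h1)
  have hc2 : (1 : ℝ) - Real.cos ((k:ℝ)*β) ≠ 0 := sub_ne_zero.mpr (Ne.symm h2)
  have hc3 : (1 : ℝ) - (Real.cos ((k:ℝ)*β) * Real.cos β - Real.sin ((k:ℝ)*β) * Real.sin β) ≠ 0 :=
    sub_ne_zero.mpr (Ne.symm h3)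
  have hs1 := Real.sin_sq_add_cos_sq ((k:ℝ)*β)
  have hs2 := Real.sin_sq_add_cos_sq β
  have key : Real.sin ((k:ℝ)*β) ^ 2 * Real.sin β ^ 2
      = (1 - Real.cos ((k:ℝ)*β) ^ 2) * (1 - Real.cos β ^ 2) := by
    nlinarith [hs1, hs2]
  have hc1' : (1 : ℝ) - (Real.cos β * Real.cos ((k:ℝ)*β) + Real.sin ((k:ℝ)*β) * Real.sin β) ≠ 0 := by
    rwa [mul_comm (Real.cos β)]
  have hc3' : (1 : ℝ) - (Real.cos β * Real.cos ((k:ℝ)*β) - Real.sin ((k:ℝ)*β) * Real.sin β) ≠ 0 := by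
    rwa [mul_comm (Real.cos β)]
  field_simp
  linear_combination ((1 - Real.cos β) ^ 2) * key
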